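/- Let G be a graph in standard Cohen–Macaulay very well-covered form on {x_1,…,x_n,y_1,…,y_n}, and let G_1, G_2 be as defined. Then: (a) a subset C of the vertices with y_n ∈ C is a minimal vertex cover of G if and only if {x_{i_1},…,x_{i_t}} ⊆ C and C ∖ ({x_{i_1},…,x_{i_t}} ∪ {y_n}) is a minimal vertex cover of G_1; and (b) a subset C of the vertices with x_n ∈ C is a minimal vertex cover of G if and only if {x_{j_1},…,x_{j_p}} ⊆ C and C ∖ ({x_{j_1},…,x_{j_p}} ∪ {x_n}) is a minimal vertex cover of G_2. Moreover every minimal vertex cover of G contains exactly one of x_n and y_n, so these two families partition the set of minimal vertex covers of G. -/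

import Mathlib

/-- `C` is a vertex cover of the graph `G`. -/
def IsVertexCover {V : Type*} (G : SimpleGraph V) (C : Finset V) : Prop :=
  ∀ ⦃v w : V⦄, G.Adj v w → v ∈ C ∨ w ∈ C

/-- `C` is a minimal vertex cover of the graph `G`. -/
def IsMinVertexCover {V : Type*} (G : SimpleGraph V) (C : Finset V) : Prop :=
  IsVertexCover G C ∧ ∀ D ⊆ C, IsVertexCover G D → D = C

/-- `C` is an independent set of the graph `G`. -/
def IsIndepSet {V : Type*} (G : SimpleGraph V) (C : Finset V) : Prop :=
  ∀ ⦃v w : V⦄, v ∈ C → w ∈ C → ¬ G.Adj v w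

/-- `C` is a maximal independent set of the graph `G`. -/
def IsMaxIndepSet {V : Type*} (G : SimpleGraph V) (C : Finset V) : Prop :=
  IsIndepSet G C ∧ ∀ D, C ⊆ D → IsIndepSet G D → D = C

/-- A graph on the vertex set `{x_i, y_i : i ∈ ι}` (with `x_i = Sum.inl i` and
`y_i = Sum.inr i`) is in standard Cohen–Macaulay very well-covered form if it satisfies
conditions (i)–(v) of the Crupi–Rinaldo–Terai characterization. -/
def StdCMVWC {ι : Type*} [LinearOrder ι] [Fintype ι] (G : SimpleGraph (ι ⊕ ι)) : Prop :=
  IsMinVertexCover G (Finset.univ.image Sum.inl) ∧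
  IsMaxIndepSet G (Finset.univ.image Sum.inr) ∧
  (∀ i : ι, G.Adj (Sum.inl i) (Sum.inr i)) ∧
  (∀ i j : ι, G.Adj (Sum.inl i) (Sum.inr j) → i ≤ j) ∧
  (∀ i j : ι, G.Adj (Sum.inl i) (Sum.inr j) → ¬ G.Adj (Sum.inl i) (Sum.inl j)) ∧
  (∀ (i j k : ι) (z : ι ⊕ ι), (z = Sum.inl i ∨ z = Sum.inr i) →
    i ≠ j → j ≠ k → i ≠ k →
    G.Adj z (Sum.inl j) → G.Adj (Sum.inr j) (Sum.inl k) → G.Adj z (Sum.inl k))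


/-- The subgraph of `G` obtained by deleting all vertices outside `S` (together with
their incident edges), viewed as a graph on the same vertex set. -/
def restrictG {V : Type*} (G : SimpleGraph V) (S : Set V) : SimpleGraph V where
  Adj v w := G.Adj v w ∧ v ∈ S ∧ w ∈ S
  symm := ⟨fun v w ⟨h, hv, hw⟩ => ⟨h.symm, hw, hv⟩⟩
  loopless := ⟨fun v h => G.irrefl h.1⟩

/-- The vertex `x_n`. -/
def xnV (n : ℕ) : Fin (n + 1) ⊕ Fin (n + 1) := Sum.inl (Fin.last n)

/-- The vertex `y_n`. -/
def ynV (n : ℕ) : Fin (n + 1) ⊕ Fin (n + 1) := Sum.inr (Fin.last n)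

/-- The indices `i` with `x_i ∈ N(x_n)`, i.e. `N(x_n) ∖ {y_n} = {x_{i_1},…,x_{i_t}}`. -/
def nbrX (n : ℕ) (G : SimpleGraph (Fin (n + 1) ⊕ Fin (n + 1))) [DecidableRel G.Adj] :
    Finset (Fin (n + 1)) :=
  Finset.univ.filter fun i => G.Adj (Sum.inl i) (xnV n)

/-- The indices `i` with `x_i ∈ N(y_n)`, i.e. `N(y_n) ∖ {x_n} = {x_{j_1},…,x_{j_p}}`. -/
def nbrY (n : ℕ) (G : SimpleGraph (Fin (n + 1) ⊕ Fin (n + 1))) [DecidableRel G.Adj] :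
    Finset (Fin (n + 1)) :=
  Finset.univ.filter fun i => G.Adj (Sum.inl i) (ynV n)

/-- `G_1 = G ∖ {x_{i_1},y_{i_1},…,x_{i_t},y_{i_t},x_n,y_n}`. -/
def G₁ (n : ℕ) (G : SimpleGraph (Fin (n + 1) ⊕ Fin (n + 1))) [DecidableRel G.Adj] :
    SimpleGraph (Fin (n + 1) ⊕ Fin (n + 1)) :=
  restrictG G {v | Sum.elim id id v ∉ nbrX n G ∧ Sum.elim id id v ≠ Fin.last n}

/-- `G_2 = G ∖ {x_{j_1},y_{j_1},…,x_{j_p},y_{j_p},x_n,y_n}`. -/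
def G₂ (n : ℕ) (G : SimpleGraph (Fin (n + 1) ⊕ Fin (n + 1))) [DecidableRel G.Adj] :
    SimpleGraph (Fin (n + 1) ⊕ Fin (n + 1)) :=
  restrictG G {v | Sum.elim id id v ∉ nbrY n G ∧ Sum.elim id id v ≠ Fin.last n}

/-- `G_3 = G ∖ {x_i, y_i : x_i ∈ N[x_n] ∪ N[y_n]}`, the induced subgraph `G_1 ∩ G_2`. -/
def G₃ (n : ℕ) (G : SimpleGraph (Fin (n + 1) ⊕ Fin (n + 1))) [DecidableRel G.Adj] :
    SimpleGraph (Fin (n + 1) ⊕ Fin (n + 1)) :=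
  restrictG G {v | Sum.elim id id v ∉ nbrX n G ∧ Sum.elim id id v ∉ nbrY n G ∧
    Sum.elim id id v ≠ Fin.last n}

section Aux

variable {V : Type*} [DecidableEq V]

/-- A minimal vertex cover can contain no isolated vertex. -/
lemma aux_not_mem_of_isolated {G : SimpleGraph V} {C : Finset V} {v : V}
    (hC : IsMinVertexCover G C) (hv : ∀ w, ¬ G.Adj v w) : v ∉ C := by
  intro hvC
  have hcov : IsVertexCover G (C.erase v) := by
    intro a b hadj
    rcases hC.1 hadj with h | h
    · refine Or.inl (Finset.mem_erase.2 ⟨?_, h⟩)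
      rintro rfl; exact hv b hadj
    · refine Or.inr (Finset.mem_erase.2 ⟨?_, h⟩)
      rintro rfl; exact hv a hadj.symm
  have heq := hC.2 _ (Finset.erase_subset v C) hcov
  rw [← heq] at hvC
  exact Finset.notMem_erase v C hvC

/-- If `C` is a minimal vertex cover and `p ∈ C`, then `p` has a neighbor outside `C`. -/
lemma aux_erase_witness {G : SimpleGraph V} {C : Finset V} {p : V}
    (hC : IsMinVertexCover G C) (hp : p ∈ C) : ∃ w, G.Adj p w ∧ w ∉ C := by
  by_contra h
  push_neg at h
  have hcov : IsVertexCover G (C.erase p) := by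
    intro v w hadj
    by_cases hvp : v = p
    · subst hvp
      refine Or.inr (Finset.mem_erase.2 ⟨?_, h w hadj⟩)
      rintro rfl; exact G.loopless.irrefl _ hadj
    · by_cases hwp : w = p
      · subst hwp
        exact Or.inl (Finset.mem_erase.2 ⟨hvp, h v hadj.symm⟩)
      · rcases hC.1 hadj with hv | hw
        · exact Or.inl (Finset.mem_erase.2 ⟨hvp, hv⟩)
        · exact Or.inr (Finset.mem_erase.2 ⟨hwp, hw⟩)
  have heq := hC.2 _ (Finset.erase_subset p C) hcov
  rw [← heq] at hp
  exact Finset.notMem_erase p C hp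

/-- Transfer of minimal vertex covers between `G` and an induced subgraph. -/
lemma aux_cover_restrict_iff (G : SimpleGraph V) (S : Set V) (R C : Finset V)
    (hCR : R ⊆ C)
    (hSR : ∀ v ∈ S, v ∉ R)
    (hcov : ∀ v w, G.Adj v w → (v ∈ S ∧ w ∈ S) ∨ v ∈ R ∨ w ∈ R)
    (hpriv : ∀ D ⊆ C, IsVertexCover G D → R ⊆ D) :
    IsMinVertexCover G C ↔ IsMinVertexCover (restrictG G S) (C \ R) := by
  constructor
  · rintro ⟨hc, hmin⟩
    constructor
    · rintro v w ⟨hadj, hvS, hwS⟩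
      rcases hc hadj with h | h
      · exact Or.inl (Finset.mem_sdiff.2 ⟨h, hSR v hvS⟩)
      · exact Or.inr (Finset.mem_sdiff.2 ⟨h, hSR w hwS⟩)
    · intro D hD hDcov
      have hDRcov : IsVertexCover G (D ∪ R) := by
        intro v w hadj
        rcases hcov v w hadj with ⟨hvS, hwS⟩ | h | h
        · rcases hDcov ⟨hadj, hvS, hwS⟩ with h | h
          · exact Or.inl (Finset.mem_union_left _ h)
          · exact Or.inr (Finset.mem_union_left _ h)
        · exact Or.inl (Finset.mem_union_right _ h)
        · exact Or.inr (Finset.mem_union_right _ h)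
      have hsub : D ∪ R ⊆ C := by
        intro v hv
        rcases Finset.mem_union.1 hv with h | h
        · exact (Finset.mem_sdiff.1 (hD h)).1
        · exact hCR h
      have heq := hmin _ hsub hDRcov
      apply Finset.Subset.antisymm hD
      intro v hv
      have hv' := Finset.mem_sdiff.1 hv
      have hvDR : v ∈ D ∪ R := heq ▸ hv'.1
      rcases Finset.mem_union.1 hvDR with h | h
      · exact h
      · exact absurd h hv'.2
  · rintro ⟨hc, hmin⟩
    constructor
    · intro v w hadj
      rcases hcov v w hadj with ⟨hvS, hwS⟩ | h | h
      · rcases hc ⟨hadj, hvS, hwS⟩ with h | h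
        · exact Or.inl (Finset.mem_sdiff.1 h).1
        · exact Or.inr (Finset.mem_sdiff.1 h).1
      · exact Or.inl (hCR h)
      · exact Or.inr (hCR h)
    · intro D hD hDcov
      have hRD : R ⊆ D := hpriv D hD hDcov
      have hD'cov : IsVertexCover (restrictG G S) (D \ R) := by
        rintro v w ⟨hadj, hvS, hwS⟩
        rcases hDcov hadj with h | h
        · exact Or.inl (Finset.mem_sdiff.2 ⟨h, hSR v hvS⟩)
        · exact Or.inr (Finset.mem_sdiff.2 ⟨h, hSR w hwS⟩)
      have heq := hmin (D \ R)
        (Finset.sdiff_subset_sdiff hD (Finset.Subset.refl R)) hD'cov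
      apply Finset.Subset.antisymm hD
      intro v hv
      by_cases hvR : v ∈ R
      · exact hRD hvR
      · have hv' : v ∈ C \ R := Finset.mem_sdiff.2 ⟨hv, hvR⟩
        exact (Finset.mem_sdiff.1 (heq ▸ hv')).1

end Aux

section AuxG

variable {n : ℕ} {G : SimpleGraph (Fin (n + 1) ⊕ Fin (n + 1))} [DecidableRel G.Adj]

lemma aux_noYY (hG : StdCMVWC G) (a b : Fin (n + 1)) :
    ¬ G.Adj (Sum.inr a) (Sum.inr b) := by
  intro h
  exact hG.2.1.1 (by simp) (by simp) h

lemma aux_mem_nbrX {i : Fin (n + 1)} (hi : i ∈ nbrX n G) :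
    G.Adj (Sum.inl i) (xnV n) := (Finset.mem_filter.1 hi).2

lemma aux_mem_nbrY {i : Fin (n + 1)} (hi : i ∈ nbrY n G) :
    G.Adj (Sum.inl i) (ynV n) := (Finset.mem_filter.1 hi).2

lemma aux_nbrX_mem {i : Fin (n + 1)} (h : G.Adj (Sum.inl i) (xnV n)) : i ∈ nbrX n G :=
  Finset.mem_filter.2 ⟨Finset.mem_univ _, h⟩

lemma aux_nbrY_mem {i : Fin (n + 1)} (h : G.Adj (Sum.inl i) (ynV n)) : i ∈ nbrY n G :=
  Finset.mem_filter.2 ⟨Finset.mem_univ _, h⟩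

/-- Claim A: a neighbor `x_j` of `y_i` with `i ∈ nbrX`, `j ≠ i`, satisfies `j ∈ nbrX`. -/
lemma aux_claimA (hG : StdCMVWC G) {i j : Fin (n + 1)} (hi : i ∈ nbrX n G)
    (hadj : G.Adj (Sum.inl j) (Sum.inr i)) (hij : j ≠ i) : j ∈ nbrX n G := by
  have hin : G.Adj (Sum.inl i) (xnV n) := aux_mem_nbrX hi
  have hine : i ≠ Fin.last n := by
    rintro rfl; exact G.loopless.irrefl _ hin
  have hj : j ≤ i := hG.2.2.2.1 j i hadj
  have hjn : j ≠ Fin.last n := by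
    rintro rfl; exact hine (le_antisymm (Fin.le_last i) hj)
  have hres := hG.2.2.2.2.2 (Fin.last n) i j (Sum.inl (Fin.last n)) (Or.inl rfl)
    (Ne.symm hine) (Ne.symm hij) (Ne.symm hjn) hin.symm hadj.symm
  exact aux_nbrX_mem hres.symm

/-- Claim B: a neighbor `x_j` of `y_i` with `i ∈ nbrY`, `i ≠ n`, `j ≠ i`, satisfies
`j ∈ nbrY`. -/
lemma aux_claimB (hG : StdCMVWC G) {i j : Fin (n + 1)} (hi : i ∈ nbrY n G)
    (hine : i ≠ Fin.last n) (hadj : G.Adj (Sum.inl j) (Sum.inr i)) (hij : j ≠ i) :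
    j ∈ nbrY n G := by
  have hin : G.Adj (Sum.inl i) (ynV n) := aux_mem_nbrY hi
  have hj : j ≤ i := hG.2.2.2.1 j i hadj
  have hjn : j ≠ Fin.last n := by
    rintro rfl; exact hine (le_antisymm (Fin.le_last i) hj)
  have hres := hG.2.2.2.2.2 (Fin.last n) i j (Sum.inr (Fin.last n)) (Or.inr rfl)
    (Ne.symm hine) (Ne.symm hij) (Ne.symm hjn) hin.symm hadj.symm
  exact aux_nbrY_mem hres.symm

/-- Part (c): every minimal vertex cover contains exactly one of `x_n`, `y_n`. -/
lemma aux_exactlyOne (hG : StdCMVWC G) (C : Finset (Fin (n + 1) ⊕ Fin (n + 1)))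
    (hC : IsMinVertexCover G C) : xnV n ∈ C ↔ ynV n ∉ C := by
  have hedge : G.Adj (xnV n) (ynV n) := hG.2.2.1 (Fin.last n)
  constructor
  · intro hx hy
    exfalso
    obtain ⟨w, hw, hwC⟩ := aux_erase_witness hC hy
    obtain ⟨w', hw', hw'C⟩ := aux_erase_witness hC hx
    -- w is some x_j with j ≠ n
    obtain ⟨j, rfl⟩ : ∃ j, w = Sum.inl j := by
      rcases w with j | j
      · exact ⟨j, rfl⟩
      · exact absurd hw (aux_noYY hG _ _)
    have hjn : j ≠ Fin.last n := by
      rintro rfl; exact hwC hx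
    -- w' is some x_k with k ≠ n
    obtain ⟨k, rfl⟩ : ∃ k, w' = Sum.inl k := by
      rcases w' with k | k
      · exact ⟨k, rfl⟩
      · have hkn : Fin.last n ≤ k := hG.2.2.2.1 _ _ hw'
        have : k = Fin.last n := le_antisymm (Fin.le_last k) hkn
        subst this
        exact absurd hy hw'C
    have hkn : k ≠ Fin.last n := by
      rintro rfl; exact G.loopless.irrefl _ hw'
    -- hw : Adj y_n x_j, hw' : Adj x_n x_k
    by_cases hkj : k = j
    · subst hkj
      exact hG.2.2.2.2.1 k (Fin.last n) hw.symm hw'.symm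
    · have hres := hG.2.2.2.2.2 k (Fin.last n) j (Sum.inl k) (Or.inl rfl)
        hkn (Ne.symm hjn) hkj hw'.symm hw
      rcases hC.1 hres with h | h
      · exact hw'C h
      · exact hwC h
  · intro hy
    rcases hC.1 hedge with h | h
    · exact h
    · exact absurd h hy

/-- Case analysis for part (a): every edge of `G` either lives in `G₁`'s vertex set or
has an endpoint in `{y_n} ∪ {x_i : i ∈ nbrX}`. -/
lemma aux_hcovA (hG : StdCMVWC G) :
    ∀ v w, G.Adj v w →
      (v ∈ {v : Fin (n + 1) ⊕ Fin (n + 1) |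
          Sum.elim id id v ∉ nbrX n G ∧ Sum.elim id id v ≠ Fin.last n} ∧
       w ∈ {v : Fin (n + 1) ⊕ Fin (n + 1) |
          Sum.elim id id v ∉ nbrX n G ∧ Sum.elim id id v ≠ Fin.last n}) ∨
      v ∈ insert (ynV n) ((nbrX n G).image Sum.inl) ∨
      w ∈ insert (ynV n) ((nbrX n G).image Sum.inl) := by
  have hmemR : ∀ i : Fin (n + 1), i ∈ nbrX n G →
      Sum.inl i ∈ insert (ynV n) ((nbrX n G).image Sum.inl) := fun i hi =>
    Finset.mem_insert.2 (Or.inr (Finset.mem_image_of_mem _ hi))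
  have haux : ∀ (a : Fin (n + 1)) (w), G.Adj (Sum.inl a) w →
      (Sum.inl a ∈ {v : Fin (n + 1) ⊕ Fin (n + 1) |
          Sum.elim id id v ∉ nbrX n G ∧ Sum.elim id id v ≠ Fin.last n} ∧
       w ∈ {v : Fin (n + 1) ⊕ Fin (n + 1) |
          Sum.elim id id v ∉ nbrX n G ∧ Sum.elim id id v ≠ Fin.last n}) ∨
      Sum.inl a ∈ insert (ynV n) ((nbrX n G).image
        (Sum.inl : Fin (n + 1) → Fin (n + 1) ⊕ Fin (n + 1))) ∨
      w ∈ insert (ynV n) ((nbrX n G).image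
        (Sum.inl : Fin (n + 1) → Fin (n + 1) ⊕ Fin (n + 1))) := by
    intro a w h
    by_cases ha : a ∈ nbrX n G
    · exact Or.inr (Or.inl (hmemR a ha))
    rcases w with b | b
    · -- edge x_a x_b
      by_cases hb : b ∈ nbrX n G
      · exact Or.inr (Or.inr (hmemR b hb))
      by_cases han : a = Fin.last n
      · subst han
        exact absurd (aux_nbrX_mem h.symm) hb
      by_cases hbn : b = Fin.last n
      · subst hbn
        exact absurd (aux_nbrX_mem h) ha
      · exact Or.inl ⟨⟨ha, han⟩, ⟨hb, hbn⟩⟩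
    · -- edge x_a y_b
      by_cases hbn : b = Fin.last n
      · subst hbn
        exact Or.inr (Or.inr (Finset.mem_insert.2 (Or.inl rfl)))
      by_cases hb : b ∈ nbrX n G
      · have : a ∈ nbrX n G := by
          by_cases hab : a = b
          · subst hab; exact hb
          · exact aux_claimA hG hb h hab
        exact absurd this ha
      by_cases han : a = Fin.last n
      · subst han
        have : Fin.last n ≤ b := hG.2.2.2.1 _ _ h
        exact absurd (le_antisymm (Fin.le_last b) this) hbn
      · exact Or.inl ⟨⟨ha, han⟩, ⟨hb, hbn⟩⟩
  intro v w h
  rcases v with a | a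
  · exact haux a w h
  · rcases w with b | b
    · rcases haux b _ h.symm with ⟨h1, h2⟩ | hh | hh
      · exact Or.inl ⟨h2, h1⟩
      · exact Or.inr (Or.inr hh)
      · exact Or.inr (Or.inl hh)
    · exact absurd h (aux_noYY hG a b)

/-- Case analysis for part (b). -/
lemma aux_hcovB (hG : StdCMVWC G) :
    ∀ v w, G.Adj v w →
      (v ∈ {v : Fin (n + 1) ⊕ Fin (n + 1) |
          Sum.elim id id v ∉ nbrY n G ∧ Sum.elim id id v ≠ Fin.last n} ∧
       w ∈ {v : Fin (n + 1) ⊕ Fin (n + 1) |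
          Sum.elim id id v ∉ nbrY n G ∧ Sum.elim id id v ≠ Fin.last n}) ∨
      v ∈ insert (xnV n) ((nbrY n G).image Sum.inl) ∨
      w ∈ insert (xnV n) ((nbrY n G).image Sum.inl) := by
  have hmemR : ∀ i : Fin (n + 1), i ∈ nbrY n G →
      Sum.inl i ∈ insert (xnV n) ((nbrY n G).image Sum.inl) := fun i hi =>
    Finset.mem_insert.2 (Or.inr (Finset.mem_image_of_mem _ hi))
  have hlast : Fin.last n ∈ nbrY n G := aux_nbrY_mem (hG.2.2.1 (Fin.last n))
  have haux : ∀ (a : Fin (n + 1)) (w), G.Adj (Sum.inl a) w →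
      (Sum.inl a ∈ {v : Fin (n + 1) ⊕ Fin (n + 1) |
          Sum.elim id id v ∉ nbrY n G ∧ Sum.elim id id v ≠ Fin.last n} ∧
       w ∈ {v : Fin (n + 1) ⊕ Fin (n + 1) |
          Sum.elim id id v ∉ nbrY n G ∧ Sum.elim id id v ≠ Fin.last n}) ∨
      Sum.inl a ∈ insert (xnV n) ((nbrY n G).image
        (Sum.inl : Fin (n + 1) → Fin (n + 1) ⊕ Fin (n + 1))) ∨
      w ∈ insert (xnV n) ((nbrY n G).image
        (Sum.inl : Fin (n + 1) → Fin (n + 1) ⊕ Fin (n + 1))) := by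
    intro a w h
    by_cases ha : a ∈ nbrY n G
    · exact Or.inr (Or.inl (hmemR a ha))
    have han : a ≠ Fin.last n := by
      rintro rfl; exact ha hlast
    rcases w with b | b
    · -- edge x_a x_b
      by_cases hb : b ∈ nbrY n G
      · exact Or.inr (Or.inr (hmemR b hb))
      have hbn : b ≠ Fin.last n := by
        rintro rfl; exact hb hlast
      exact Or.inl ⟨⟨ha, han⟩, ⟨hb, hbn⟩⟩
    · -- edge x_a y_b
      by_cases hbn : b = Fin.last n
      · subst hbn
        exact absurd (aux_nbrY_mem h) ha
      by_cases hb : b ∈ nbrY n G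
      · have : a ∈ nbrY n G := by
          by_cases hab : a = b
          · subst hab; exact hb
          · exact aux_claimB hG hb hbn h hab
        exact absurd this ha
      · exact Or.inl ⟨⟨ha, han⟩, ⟨hb, hbn⟩⟩
  intro v w h
  rcases v with a | a
  · exact haux a w h
  · rcases w with b | b
    · rcases haux b _ h.symm with ⟨h1, h2⟩ | hh | hh
      · exact Or.inl ⟨h2, h1⟩
      · exact Or.inr (Or.inr hh)
      · exact Or.inr (Or.inl hh)
    · exact absurd h (aux_noYY hG a b)

lemma aux_hprivA (hG : StdCMVWC G) {C : Finset (Fin (n + 1) ⊕ Fin (n + 1))}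
    (hxnC : xnV n ∉ C) :
    ∀ D ⊆ C, IsVertexCover G D → insert (ynV n) ((nbrX n G).image Sum.inl) ⊆ D := by
  intro D hD hcov v hv
  rcases Finset.mem_insert.1 hv with rfl | hv
  · rcases hcov (hG.2.2.1 (Fin.last n)) with h | h
    · exact absurd (hD h) hxnC
    · exact h
  · obtain ⟨i, hi, rfl⟩ := Finset.mem_image.1 hv
    rcases hcov (aux_mem_nbrX hi) with h | h
    · exact h
    · exact absurd (hD h) hxnC

lemma aux_hprivB (hG : StdCMVWC G) {C : Finset (Fin (n + 1) ⊕ Fin (n + 1))}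
    (hynC : ynV n ∉ C) :
    ∀ D ⊆ C, IsVertexCover G D → insert (xnV n) ((nbrY n G).image Sum.inl) ⊆ D := by
  intro D hD hcov v hv
  rcases Finset.mem_insert.1 hv with rfl | hv
  · rcases hcov (hG.2.2.1 (Fin.last n)) with h | h
    · exact h
    · exact absurd (hD h) hynC
  · obtain ⟨i, hi, rfl⟩ := Finset.mem_image.1 hv
    rcases hcov (aux_mem_nbrY hi) with h | h
    · exact h
    · exact absurd (hD h) hynC

end AuxG

/-- Minimal vertex covers of `G` containing `y_n` (resp. `x_n`) correspond to minimal
vertex covers of `G_1` (resp. `G_2`): these two families partition the minimal vertex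
covers of `G`. -/
theorem stmt4 (n : ℕ) (G : SimpleGraph (Fin (n + 1) ⊕ Fin (n + 1))) [DecidableRel G.Adj]
    (hG : StdCMVWC G) :
    (∀ C : Finset (Fin (n + 1) ⊕ Fin (n + 1)), ynV n ∈ C →
      (IsMinVertexCover G C ↔
        (nbrX n G).image Sum.inl ⊆ C ∧
          IsMinVertexCover (G₁ n G) (C \ insert (ynV n) ((nbrX n G).image Sum.inl)))) ∧
    (∀ C : Finset (Fin (n + 1) ⊕ Fin (n + 1)), xnV n ∈ C →
      (IsMinVertexCover G C ↔
        (nbrY n G).image Sum.inl ⊆ C ∧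
          IsMinVertexCover (G₂ n G) (C \ insert (xnV n) ((nbrY n G).image Sum.inl)))) ∧
    (∀ C : Finset (Fin (n + 1) ⊕ Fin (n + 1)), IsMinVertexCover G C →
      (xnV n ∈ C ↔ ynV n ∉ C)) := by
  have hSRA : ∀ v ∈ {v : Fin (n + 1) ⊕ Fin (n + 1) |
      Sum.elim id id v ∉ nbrX n G ∧ Sum.elim id id v ≠ Fin.last n},
      v ∉ insert (ynV n) ((nbrX n G).image Sum.inl) := by
    rintro v ⟨h1, h2⟩ hvR
    rcases Finset.mem_insert.1 hvR with rfl | hvR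
    · exact h2 rfl
    · obtain ⟨i, hi, rfl⟩ := Finset.mem_image.1 hvR
      exact h1 hi
  have hSRB : ∀ v ∈ {v : Fin (n + 1) ⊕ Fin (n + 1) |
      Sum.elim id id v ∉ nbrY n G ∧ Sum.elim id id v ≠ Fin.last n},
      v ∉ insert (xnV n) ((nbrY n G).image Sum.inl) := by
    rintro v ⟨h1, h2⟩ hvR
    rcases Finset.mem_insert.1 hvR with rfl | hvR
    · exact h2 rfl
    · obtain ⟨i, hi, rfl⟩ := Finset.mem_image.1 hvR
      exact h1 hi
  refine ⟨?_, ?_, fun C hC => aux_exactlyOne hG C hC⟩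
  · -- part (a)
    intro C hyC
    constructor
    · intro hC
      have hxnC : xnV n ∉ C := fun h => (aux_exactlyOne hG C hC).1 h hyC
      have hNsub : (nbrX n G).image Sum.inl ⊆ C := by
        intro v hv
        obtain ⟨i, hi, rfl⟩ := Finset.mem_image.1 hv
        rcases hC.1 (aux_mem_nbrX hi) with h | h
        · exact h
        · exact absurd h hxnC
      refine ⟨hNsub, ?_⟩
      exact (aux_cover_restrict_iff G _ _ C (Finset.insert_subset hyC hNsub)
        hSRA (aux_hcovA hG) (aux_hprivA hG hxnC)).1 hC
    · rintro ⟨hNsub, hC'⟩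
      have hxnC : xnV n ∉ C := by
        intro h
        have hnR : xnV n ∉ insert (ynV n) ((nbrX n G).image Sum.inl) := by
          intro hh
          rcases Finset.mem_insert.1 hh with hh | hh
          · exact Sum.inl_ne_inr (by exact hh)
          · obtain ⟨i, hi, hie⟩ := Finset.mem_image.1 hh
            have : i = Fin.last n := Sum.inl.inj hie
            subst this
            exact G.loopless.irrefl _ (aux_mem_nbrX hi)
        have hiso : ∀ w, ¬ (G₁ n G).Adj (xnV n) w := by
          rintro w ⟨_, ⟨_, hlast⟩, _⟩
          exact hlast rfl
        exact aux_not_mem_of_isolated hC' hiso (Finset.mem_sdiff.2 ⟨h, hnR⟩)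
      exact (aux_cover_restrict_iff G _ _ C (Finset.insert_subset hyC hNsub)
        hSRA (aux_hcovA hG) (aux_hprivA hG hxnC)).2 hC'
  · -- part (b)
    intro C hxC
    constructor
    · intro hC
      have hynC : ynV n ∉ C := (aux_exactlyOne hG C hC).1 hxC
      have hNsub : (nbrY n G).image Sum.inl ⊆ C := by
        intro v hv
        obtain ⟨i, hi, rfl⟩ := Finset.mem_image.1 hv
        rcases hC.1 (aux_mem_nbrY hi) with h | h
        · exact h
        · exact absurd h hynC
      refine ⟨hNsub, ?_⟩
      exact (aux_cover_restrict_iff G _ _ C (Finset.insert_subset hxC hNsub)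
        hSRB (aux_hcovB hG) (aux_hprivB hG hynC)).1 hC
    · rintro ⟨hNsub, hC'⟩
      have hynC : ynV n ∉ C := by
        intro h
        have hnR : ynV n ∉ insert (xnV n) ((nbrY n G).image Sum.inl) := by
          intro hh
          rcases Finset.mem_insert.1 hh with hh | hh
          · exact Sum.inr_ne_inl (by exact hh)
          · obtain ⟨i, hi, hie⟩ := Finset.mem_image.1 hh
            exact Sum.inl_ne_inr (by exact hie)
        have hiso : ∀ w, ¬ (G₂ n G).Adj (ynV n) w := by
          rintro w ⟨_, ⟨_, hlast⟩, _⟩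
          exact hlast rfl
        exact aux_not_mem_of_isolated hC' hiso (Finset.mem_sdiff.2 ⟨h, hnR⟩)
      exact (aux_cover_restrict_iff G _ _ C (Finset.insert_subset hxC hNsub)
        hSRB (aux_hcovB hG) (aux_hprivB hG hynC)).2 hC'
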